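/- Let A be a real d×d matrix and let M : [0,∞) → M_d(ℝ) be differentiable in t with M_0 = 0 and M_{t+s} = M_t + (exp(tA))ᵀ · M_s · exp(tA) for all s, t ≥ 0. Set N = (dM/dt)(0). Then for every t ≥ 0, M_t = ∫_0^t (exp(τA))ᵀ · N · exp(τA) dτ. -/

import Mathlib

noncomputable section
open Matrix
open scoped ComplexOrder

/-- `Mmat d A N t = ∫_0^t (exp(τA))ᵀ · N · exp(τA) dτ` (entrywise integral). -/
def Mmat (d : ℕ) (A N : Matrix (Fin d) (Fin d) ℝ) (t : ℝ) : Matrix (Fin d) (Fin d) ℝ :=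
  Matrix.of fun i j =>
    ∫ τ in (0:ℝ)..t, ((NormedSpace.exp (τ • A))ᵀ * N * NormedSpace.exp (τ • A)) i j

lemma expCont (d : ℕ) (A : Matrix (Fin d) (Fin d) ℝ) :
    Continuous fun τ : ℝ => NormedSpace.exp (τ • A) := by
  letI := Matrix.linftyOpNormedRing (n := Fin d) (α := ℝ)
  letI := Matrix.linftyOpNormedAlgebra (R := ℝ) (n := Fin d) (α := ℝ)
  exact continuous_iff_continuousAt.2 fun τ =>
    (hasDerivAt_exp_smul_const A τ).continuousAt

attribute [local instance] Matrix.normedAddCommGroup Matrix.normedSpace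

theorem cocycle_matrix_integral (d : ℕ) (A : Matrix (Fin d) (Fin d) ℝ)
    (M : ℝ → Matrix (Fin d) (Fin d) ℝ)
    (hdiff : ∀ t ∈ Set.Ici (0:ℝ), DifferentiableWithinAt ℝ M (Set.Ici 0) t)
    (h0 : M 0 = 0)
    (hadd : ∀ s t : ℝ, 0 ≤ s → 0 ≤ t →
      M (t + s) = M t + (NormedSpace.exp (t • A))ᵀ * M s * NormedSpace.exp (t • A))
    (N : Matrix (Fin d) (Fin d) ℝ) (hN : N = derivWithin M (Set.Ici 0) 0) :
    ∀ t : ℝ, 0 ≤ t → M t = Mmat d A N t := by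
  set E : ℝ → Matrix (Fin d) (Fin d) ℝ := fun τ => NormedSpace.exp (τ • A) with hE
  have hNderiv : HasDerivWithinAt M N (Set.Ici 0) 0 := by
    rw [hN]; exact (hdiff 0 Set.self_mem_Ici).hasDerivWithinAt
  -- key : the one-sided derivative of M at t is (E t)ᵀ N (E t)
  have key : ∀ t : ℝ, 0 ≤ t →
      HasDerivWithinAt M ((E t)ᵀ * N * E t) (Set.Ici 0) t := by
    intro t ht
    have hM := (hdiff t ht).hasDerivWithinAt
    set L := derivWithin M (Set.Ici 0) t with hL
    suffices h : L = (E t)ᵀ * N * E t by rw [← h]; exact hM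
    -- derivative of s ↦ M (t + s) at 0 within Ici 0 is L
    have h1 : HasDerivWithinAt (fun s => M (t + s)) L (Set.Ici 0) 0 := by
      have hh : HasDerivWithinAt (fun s : ℝ => t + s) 1 (Set.Ici 0) 0 :=
        ((hasDerivAt_id (0:ℝ)).const_add t).hasDerivWithinAt
      have hmaps : Set.MapsTo (fun s : ℝ => t + s) (Set.Ici 0) (Set.Ici 0) :=
        fun s hs => add_nonneg ht hs
      have := hM.scomp_of_eq (0:ℝ) hh hmaps (by simp)
      rw [one_smul] at this
      exact this
    -- derivative of s ↦ M t + (E t)ᵀ M s (E t) at 0 within Ici 0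
    have h2 : HasDerivWithinAt (fun s => M t + (E t)ᵀ * M s * E t)
        ((E t)ᵀ * N * E t) (Set.Ici 0) 0 := by
      let lm : Matrix (Fin d) (Fin d) ℝ →ₗ[ℝ] Matrix (Fin d) (Fin d) ℝ :=
        { toFun := fun X => (E t)ᵀ * X * E t
          map_add' := fun X Y => by
            simp [Matrix.mul_add, Matrix.add_mul]
          map_smul' := fun c X => by
            simp [Matrix.mul_smul, Matrix.smul_mul] }
      have hcomp : HasDerivWithinAt (fun s => lm (M s)) (lm N) (Set.Ici 0) 0 :=
        (LinearMap.toContinuousLinearMap lm).hasFDerivAt.comp_hasDerivWithinAt (0:ℝ)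
          hNderiv
      exact hcomp.const_add (M t)
    have h2' : HasDerivWithinAt (fun s => M (t + s)) ((E t)ᵀ * N * E t)
        (Set.Ici 0) 0 :=
      h2.congr (fun s hs => hadd s t hs ht) (hadd 0 t le_rfl ht)
    exact UniqueDiffWithinAt.eq_deriv _ (uniqueDiffOn_Ici (0:ℝ) 0 Set.self_mem_Ici)
      h1 h2'
  intro t ht
  ext i j
  -- entry-evaluation continuous linear map
  let pm : Matrix (Fin d) (Fin d) ℝ →ₗ[ℝ] ℝ :=
    { toFun := fun X => X i j
      map_add' := fun X Y => rfl
      map_smul' := fun c X => rfl }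
  let P := LinearMap.toContinuousLinearMap pm
  have hcontE : Continuous fun τ : ℝ => ((E τ)ᵀ * N * E τ) i j := by
    apply Continuous.matrix_elem
    exact ((Continuous.matrix_transpose (expCont d A)).mul continuous_const).mul
      (expCont d A)
  have hftc : ∫ τ in (0:ℝ)..t, ((E τ)ᵀ * N * E τ) i j
      = M t i j - M 0 i j := by
    apply intervalIntegral.integral_eq_sub_of_hasDeriv_right_of_le ht
    · exact P.continuous.comp_continuousOn
        (fun τ hτ => ((hdiff τ hτ.1).continuousWithinAt).mono (fun x hx => hx.1))
    · intro τ hτ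
      have := P.hasFDerivAt.comp_hasDerivWithinAt τ
        ((key τ hτ.1.le).mono (fun x (hx : x ∈ Set.Ioi τ) => (hτ.1.trans hx).le))
      exact this
    · exact hcontE.intervalIntegrable 0 t
  have : M t i j = ∫ τ in (0:ℝ)..t, ((E τ)ᵀ * N * E τ) i j := by
    rw [hftc, h0]; simp
  simpa [Mmat] using this
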